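/- An inverse cyclic matrix A is nonsingular if and only if d ≠ c, where d is the product of the diagonal entries and c is the cyclic product. -/

import Mathlib

open Matrix Finset

/-- A matrix (of order ≥ 2) has the *inverse cyclic property* if all its diagonal
entries are nonzero and the three cyclic entry conditions hold. -/
def InvCyclic {n : ℕ} (A : Matrix (Fin (n + 2)) (Fin (n + 2)) ℝ) : Prop :=
  (∀ i, A i i ≠ 0) ∧
  (∀ i k j : Fin (n + 2), i < k → k < j → A i j = A i k * A k j / A k k) ∧
  (∀ i j : Fin (n + 2), j < i → i ≠ Fin.last (n + 1) →
    A i j = A i (Fin.last (n + 1)) * A (Fin.last (n + 1)) j /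
      A (Fin.last (n + 1)) (Fin.last (n + 1))) ∧
  (∀ j : Fin (n + 2), j < Fin.last (n + 1) →
    A (Fin.last (n + 1)) j = A (Fin.last (n + 1)) 0 * A 0 j / A 0 0)

/-- `d`, the product of the diagonal entries. -/
def diagProd {n : ℕ} (A : Matrix (Fin (n + 2)) (Fin (n + 2)) ℝ) : ℝ := ∏ i, A i i

/-- `c`, the cyclic product `a₁₂a₂₃⋯a_{(n-1)n}a_{n1}`. -/
def cycProd {n : ℕ} (A : Matrix (Fin (n + 2)) (Fin (n + 2)) ℝ) : ℝ :=
  ∏ i : Fin (n + 2), A i (i + 1)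

namespace InvCyclicAux

open Fin.NatCast

variable {n : ℕ} {A : Matrix (Fin (n + 2)) (Fin (n + 2)) ℝ}

local notation "N" => Fin.last (n+1)

lemma r2 (hA : InvCyclic A) {i k j : Fin (n+2)} (h1 : i < k) (h2 : k < j) :
    A i j * A k k = A i k * A k j := by
  rw [hA.2.1 i k j h1 h2, div_mul_cancel₀ _ (hA.1 k)]

lemma r3 (hA : InvCyclic A) {i j : Fin (n+2)} (h1 : j < i) (h2 : i ≠ N) :
    A i j * A N N = A i N * A N j := by
  rw [hA.2.2.1 i j h1 h2, div_mul_cancel₀ _ (hA.1 N)]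

lemma r4 (hA : InvCyclic A) {j : Fin (n+2)} (h : j < N) :
    A N j * A 0 0 = A N 0 * A 0 j := by
  rw [hA.2.2.2 j h, div_mul_cancel₀ _ (hA.1 0)]

lemma V (hA : InvCyclic A) {k : Fin (n+2)} (hk : k < N) :
    A 0 k * A k (k+1) = A 0 (k+1) * A k k := by
  rcases eq_or_ne k 0 with h | h
  · subst h; rw [zero_add]; ring
  · exact (r2 hA (Fin.pos_of_ne_zero h) (Fin.lt_add_one_iff.mpr hk)).symm

lemma V2 (hA : InvCyclic A) {k : Fin (n+2)} (hk : k < N) :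
    A 0 k * A k N = A 0 N * A k k := by
  rcases eq_or_ne k 0 with h | h
  · subst h; ring
  · exact (r2 hA (Fin.pos_of_ne_zero h) hk).symm

lemma W (hA : InvCyclic A) {k : Fin (n+2)} (hk1 : k + 1 < N) :
    A N (k+1) * A k k = A N k * A k (k+1) := by
  rcases eq_or_ne k N with h | h
  · subst h; rw [Fin.last_add_one]; ring
  · have hk : k < N := lt_of_le_of_ne (Fin.le_last k) h
    have h1' := r4 hA hk1
    have h2' := r4 hA hk
    have h3' := V hA hk
    have h0 := hA.1 (0 : Fin (n+2))
    apply mul_left_cancel₀ h0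
    linear_combination A k k * h1' - A k (k+1) * h2' - A N 0 * h3'

lemma key2 (hA : InvCyclic A) {i k : Fin (n+2)} (hik : i ≠ k + 1) :
    A i (k+1) * A k k = A i k * A k (k+1) := by
  rcases eq_or_ne k N with h | h
  · subst h
    rw [Fin.last_add_one] at hik ⊢
    rcases eq_or_ne i N with h2 | h2
    · subst h2; ring
    · exact r3 hA (Fin.pos_of_ne_zero hik) h2
  · have hk : k < N := lt_of_le_of_ne (Fin.le_last k) h
    have hkk : k < k + 1 := Fin.lt_add_one_iff.mpr hk
    rcases lt_trichotomy i k with h1 | h1 | h1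
    · exact r2 hA h1 hkk
    · subst h1; ring
    · have hk1i : k + 1 ≤ i := by
        have hv := Fin.val_add_one_of_lt hk
        rw [Fin.le_def, hv]
        exact Fin.lt_def.mp h1
      have hk1i' : k + 1 < i := lt_of_le_of_ne hk1i (Ne.symm hik)
      rcases eq_or_ne i N with h2 | h2
      · subst h2; exact W hA hk1i'
      · have hiN : i < N := lt_of_le_of_ne (Fin.le_last i) h2
        have hW := W hA (lt_trans hk1i' hiN)
        have e1 := r3 hA hk1i' h2
        have e2 := r3 hA h1 h2
        have hN := hA.1 N
        apply mul_left_cancel₀ hN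
        linear_combination A k k * e1 - A k (k+1) * e2 + A i N * hW

lemma Snat (hA : InvCyclic A) : ∀ m, m ≤ n + 1 →
    A 0 (m : Fin (n+2)) * ∏ t ∈ range m, A (t : Fin (n+2)) (t : Fin (n+2)) =
    A 0 0 * ∏ t ∈ range m, A (t : Fin (n+2)) ((t : Fin (n+2)) + 1) := by
  intro m
  induction m with
  | zero => simp
  | succ m ih =>
    intro hm
    have ihm := ih (le_of_lt (Nat.lt_of_succ_le hm))
    have hc1 : ((m + 1 : ℕ) : Fin (n+2)) = (m : Fin (n+2)) + 1 := by push_cast; ring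
    have hstep : A 0 ((m+1 : ℕ) : Fin (n+2)) * A (m : Fin (n+2)) (m : Fin (n+2)) =
        A 0 (m : Fin (n+2)) * A (m : Fin (n+2)) ((m : Fin (n+2)) + 1) := by
      rcases Nat.eq_zero_or_pos m with h | h
      · subst h
        norm_num
        ring
      · have h0m : (0 : Fin (n+2)) < (m : Fin (n+2)) := by
          rw [Fin.lt_def, Fin.val_cast_of_lt (by omega)]
          simpa using h
        have hmN : (m : Fin (n+2)) < N := by
          rw [Fin.lt_def, Fin.val_cast_of_lt (by omega)]
          simp only [Fin.val_last]
          omega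
        have hm1 : (m : Fin (n+2)) < (m : Fin (n+2)) + 1 := Fin.lt_add_one_iff.mpr hmN
        rw [hc1]
        exact r2 hA h0m hm1
    rw [prod_range_succ, prod_range_succ]
    linear_combination (∏ t ∈ range m, A (t : Fin (n+2)) (t : Fin (n+2))) * hstep +
      A (m : Fin (n+2)) ((m : Fin (n+2)) + 1) * ihm

lemma diag_split (A : Matrix (Fin (n + 2)) (Fin (n + 2)) ℝ) :
    diagProd A = (∏ t ∈ range (n+1), A (t : Fin (n+2)) (t : Fin (n+2))) * A N N := by
  have h1 : ∏ t ∈ range (n+2), A (t : Fin (n+2)) (t : Fin (n+2)) = diagProd A := by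
    rw [← Fin.prod_univ_eq_prod_range (fun t => A (t : Fin (n+2)) (t : Fin (n+2))) (n+2)]
    exact Finset.prod_congr rfl fun i _ => by rw [Fin.cast_val_eq_self]
  have hN : ((n+1 : ℕ) : Fin (n+2)) = N := by
    apply Fin.ext; rw [Fin.val_cast_of_lt (by omega), Fin.val_last]
  rw [← h1, prod_range_succ, hN]

lemma cyc_split (A : Matrix (Fin (n + 2)) (Fin (n + 2)) ℝ) :
    cycProd A = (∏ t ∈ range (n+1), A (t : Fin (n+2)) ((t : Fin (n+2)) + 1)) * A N 0 := by
  have h1 : ∏ t ∈ range (n+2), A (t : Fin (n+2)) ((t : Fin (n+2)) + 1) = cycProd A := by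
    rw [← Fin.prod_univ_eq_prod_range (fun t => A (t : Fin (n+2)) ((t : Fin (n+2)) + 1)) (n+2)]
    exact Finset.prod_congr rfl fun i _ => by rw [Fin.cast_val_eq_self]
  have hN : ((n+1 : ℕ) : Fin (n+2)) = N := by
    apply Fin.ext; rw [Fin.val_cast_of_lt (by omega), Fin.val_last]
  rw [← h1, prod_range_succ, hN, Fin.last_add_one]

lemma claim0 (hA : InvCyclic A) :
    A 0 N * A N 0 * diagProd A = cycProd A * A 0 0 * A N N := by
  have hS := Snat hA (n+1) le_rfl
  have hN : ((n+1 : ℕ) : Fin (n+2)) = N := by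
    apply Fin.ext; rw [Fin.val_cast_of_lt (by omega), Fin.val_last]
  rw [hN] at hS
  rw [diag_split A, cyc_split A]
  linear_combination A N 0 * A N N * hS

lemma key1 (hA : InvCyclic A) (k : Fin (n+2)) :
    A (k+1) k * A k (k+1) * diagProd A = cycProd A * A k k * A (k+1) (k+1) := by
  have h0 := hA.1 (0 : Fin (n+2))
  have hN' := hA.1 N
  have hc0 := claim0 hA
  rcases eq_or_ne k N with h | h
  · subst h; rw [Fin.last_add_one]
    linear_combination hc0
  · have hk : k < N := lt_of_le_of_ne (Fin.le_last k) h
    have hkk : k < k + 1 := Fin.lt_add_one_iff.mpr hk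
    rcases eq_or_ne (k+1) N with h1 | h1
    · rw [h1]
      have e1 := r4 hA hk
      have e2 := V2 hA hk
      apply mul_left_cancel₀ h0
      linear_combination (A k N * diagProd A) * e1 + (A N 0 * diagProd A) * e2 +
        (A k k) * hc0
    · have hk1 : k + 1 < N := lt_of_le_of_ne (Fin.le_last _) h1
      have e1 := r3 hA hkk h1
      have e2 := r4 hA hk
      have e3 := V hA hk
      have e4 := V2 hA hk1
      apply mul_left_cancel₀ hN'
      apply mul_left_cancel₀ h0
      linear_combination (A 0 0 * A k (k+1) * diagProd A) * e1 +
        (A (k+1) N * A k (k+1) * diagProd A) * e2 +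
        (A N 0 * A (k+1) N * diagProd A) * e3 +
        (A N 0 * A k k * diagProd A) * e4 +
        (A k k * A (k+1) (k+1)) * hc0

end InvCyclicAux

theorem stmt1 {n : ℕ} (A : Matrix (Fin (n + 2)) (Fin (n + 2)) ℝ) (hA : InvCyclic A) :
    A.det ≠ 0 ↔ diagProd A ≠ cycProd A := by
  have hdP : diagProd A ≠ 0 := Finset.prod_ne_zero_iff.mpr fun i _ => hA.1 i
  have h10 : (1 : Fin (n+2)) ≠ 0 := by
    simp [Fin.ext_iff]
  constructor
  · intro hdet hdc
    apply hdet
    rw [← Matrix.exists_mulVec_eq_zero_iff]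
    refine ⟨(Pi.single (1 : Fin (n+2)) (1:ℝ) : Fin (n+2) → ℝ) -
      (A 0 1 / A 0 0) • (Pi.single (0 : Fin (n+2)) (1:ℝ) : Fin (n+2) → ℝ), ?_, ?_⟩
    · intro h
      have h1 := congrFun h 1
      simp [Pi.single_apply, h10] at h1
    · rw [Matrix.mulVec_sub, Matrix.mulVec_smul, Matrix.mulVec_single, Matrix.mulVec_single]
      ext i
      simp only [Pi.sub_apply, Pi.smul_apply, smul_eq_mul, Pi.zero_apply, mul_one]
      have key : A i 1 * A 0 0 = A i 0 * A 0 1 := by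
        rcases eq_or_ne i 1 with h | h
        · subst h
          have h1 := InvCyclicAux.key1 hA 0
          rw [zero_add] at h1
          rw [hdc] at h1
          have hc : cycProd A ≠ 0 := by rw [← hdc]; exact hdP
          apply mul_right_cancel₀ hc
          linear_combination -h1
        · have h2 := InvCyclicAux.key2 hA (i := i) (k := 0) (by rwa [zero_add])
          rwa [zero_add] at h2
      have h00 := hA.1 0
      simp only [MulOpposite.op_one, one_smul, Matrix.col_apply]
      field_simp
      linear_combination key
  · intro hdc
    set q := cycProd A / diagProd A with hq
    set B : Matrix (Fin (n+2)) (Fin (n+2)) ℝ := fun k j =>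
      (if k = j then (A j j)⁻¹ else 0) -
        (if k = j - 1 then A (j-1) j / (A (j-1) (j-1) * A j j) else 0) with hB
    have hAB : A * B = (1 - q) • (1 : Matrix (Fin (n+2)) (Fin (n+2)) ℝ) := by
      ext i j
      rw [Matrix.mul_apply]
      simp only [hB, mul_sub, mul_ite, mul_zero, Finset.sum_sub_distrib,
        Finset.sum_ite_eq', mem_univ, if_true]
      rw [Matrix.smul_apply, Matrix.one_apply]
      set k0 := j - 1 with hk0def
      have hk0 : k0 + 1 = j := sub_add_cancel j 1
      have hjj := hA.1 j
      have hkk := hA.1 k0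
      rcases eq_or_ne i j with h | h
      · subst h
        rw [if_pos rfl]
        have h1 := InvCyclicAux.key1 hA k0
        rw [hk0] at h1
        have e2 : A i k0 * A k0 i / (A k0 k0 * A i i) = cycProd A / diagProd A := by
          rw [div_eq_div_iff (mul_ne_zero hkk hjj) hdP]
          linear_combination h1
        rw [mul_inv_cancel₀ hjj, ← mul_div_assoc, e2, hq, smul_eq_mul, mul_one]
      · rw [if_neg h]
        have h2 := InvCyclicAux.key2 hA (i := i) (k := k0) (by rw [hk0]; exact h)
        rw [hk0] at h2
        field_simp
        linear_combination h2
    have hdet2 : A.det * B.det = (1 - q)^(n+2) := by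
      rw [← Matrix.det_mul, hAB, Matrix.det_smul, Matrix.det_one, mul_one, Fintype.card_fin]
    have hq1 : 1 - q ≠ 0 := by
      rw [hq]
      intro h
      exact hdc ((div_eq_one_iff_eq hdP).mp (by linarith)).symm
    intro h0
    rw [h0, zero_mul] at hdet2
    exact (pow_ne_zero _ hq1) hdet2.symm
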